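/- Let Q be a subset of a Euclidean space E that is prox-regular at x̄ ∈ Q with the metric projection P_Q being C¹ near x̄. Then the tangent cone mapping x ↦ T_Q(x) (for x ∈ Q near x̄) is outer-semicontinuous at x̄: for any sequences xᵢ → x̄ with xᵢ ∈ Q and wᵢ ∈ T_Q(xᵢ) with wᵢ → w̄, one has w̄ ∈ T_Q(x̄). In particular dim T_Q(x) ≤ dim T_Q(x̄) for x ∈ Q near x̄. -/

import Mathlib

open Filter Metric Topology

variable {E : Type*} [NormedAddCommGroup E] [InnerProductSpace ℝ E] [FiniteDimensional ℝ E]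

/-- The metric projection of `x` onto `Q`: the set of nearest points of `Q`. -/
def projSet (Q : Set E) (x : E) : Set E := {y | y ∈ Q ∧ dist x y = Metric.infDist x Q}

/-- `Q` is prox-regular at `x₀`: `x₀ ∈ Q`, `Q` is locally closed around `x₀`, and the
metric projection onto `Q` is single-valued on a neighborhood of `x₀`. -/
def ProxRegularAt (Q : Set E) (x₀ : E) : Prop :=
  x₀ ∈ Q ∧ ∃ ε > (0:ℝ), IsClosed (Q ∩ Metric.closedBall x₀ ε) ∧
    ∀ x ∈ Metric.ball x₀ ε, ∃! y, y ∈ projSet Q x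

/-- The proximal normal cone: nonnegative multiples of vectors `v` with `x₀ ∈ P_Q (x₀ + v)`. -/
def proxNormalCone (Q : Set E) (x₀ : E) : Set E :=
  {w | ∃ t : ℝ, ∃ v : E, 0 ≤ t ∧ x₀ ∈ projSet Q (x₀ + v) ∧ w = t • v}

/-- `P` has directional derivative `L` at `x` in direction `v`. -/
def HasDirDeriv (P : E → E) (x v L : E) : Prop :=
  Filter.Tendsto (fun t : ℝ => t⁻¹ • (P (x + t • v) - P x)) (𝓝[>] (0:ℝ)) (𝓝 L)

lemma projSet_self {Q : Set E} {x : E} (hx : x ∈ Q) : projSet Q x = {x} := by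
  ext y
  simp only [projSet, Set.mem_setOf_eq, Set.mem_singleton_iff,
    Metric.infDist_zero_of_mem hx]
  constructor
  · rintro ⟨-, hy⟩
    exact (dist_eq_zero.mp hy).symm
  · rintro rfl
    exact ⟨hx, dist_self _⟩

/-- If `P` fixes `Q ∩ U` and is differentiable at `x ∈ Q ∩ U`, then the derivative of `P`
at `x` fixes every tangent direction of `Q` at `x`. -/
lemma fderiv_fixes_tangent {Q U : Set E} (hU : IsOpen U) {P : E → E}
    (hPid : ∀ y ∈ Q, y ∈ U → P y = y) {x : E} (hx : x ∈ Q) (hxU : x ∈ U)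
    {A : E →L[ℝ] E} (hA : HasFDerivAt P A x)
    {w : E} (hw : w ∈ tangentConeAt ℝ Q x) : A w = w := by
  obtain ⟨c, d, hc, hds, hcd⟩ := mem_tangentConeAt_iff_exists_seq_norm_tendsto_atTop.mp hw
  have hd0 : Tendsto d atTop (𝓝 0) := tangentConeAt.lim_zero atTop hc hcd
  have hxd : Tendsto (fun n => x + d n) atTop (𝓝 x) := by
    simpa using tendsto_const_nhds.add hd0
  have hUev : ∀ᶠ n in atTop, x + d n ∈ U := hxd (hU.mem_nhds hxU)
  have hlo : (fun n => P (x + d n) - P x - A (d n)) =o[atTop] d := by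
    have h1 := hA.isLittleO.comp_tendsto hxd
    simp only [Function.comp_def, add_sub_cancel_left] at h1
    exact h1
  have hsmul : (fun n => c n • (P (x + d n) - P x - A (d n))) =o[atTop]
      (fun n => c n • d n) :=
    (Asymptotics.isBigO_refl c atTop).smul_isLittleO hlo
  have hbdd : (fun n => c n • d n) =O[atTop] (fun _ => (1:ℝ)) := hcd.isBigO_one ℝ
  have htend : Tendsto (fun n => c n • (P (x + d n) - P x - A (d n))) atTop (𝓝 0) :=
    (Asymptotics.isLittleO_one_iff ℝ).mp (hsmul.trans_isBigO hbdd)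
  have heq : ∀ᶠ n in atTop,
      c n • (P (x + d n) - P x - A (d n)) = c n • d n - A (c n • d n) := by
    filter_upwards [hds, hUev] with n hnQ hnU
    rw [hPid _ hnQ hnU, hPid x hx hxU]
    simp [smul_sub, map_smul]
  have htend2 : Tendsto (fun n => c n • d n - A (c n • d n)) atTop (𝓝 0) :=
    htend.congr' heq
  have htend3 : Tendsto (fun n => c n • d n - A (c n • d n)) atTop (𝓝 (w - A w)) :=
    hcd.sub ((A.continuous.tendsto w).comp hcd)
  have : w - A w = 0 := tendsto_nhds_unique htend3 htend2
  linear_combination (norm := abel) -this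

/-- If `P` maps a neighborhood `U` of `x` into `Q`, fixes `x`, and is differentiable at `x`,
then every fixed vector of the derivative lies in the tangent cone of `Q` at `x`. -/
lemma fixed_mem_tangentCone {Q U : Set E} (hU : IsOpen U) {P : E → E}
    (hPQ : ∀ y ∈ U, P y ∈ Q) {x : E} (hxU : x ∈ U) (hPx : P x = x)
    {A : E →L[ℝ] E} (hA : HasFDerivAt P A x)
    {v : E} (hv : A v = v) : v ∈ tangentConeAt ℝ Q x := by
  set t : ℕ → ℝ := fun n => ((n : ℝ) + 1)⁻¹ with ht
  have htpos : ∀ n, 0 < t n := fun n => by positivity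
  have htne : ∀ n, t n ≠ 0 := fun n => (htpos n).ne'
  have ht0 : Tendsto t atTop (𝓝 0) :=
    tendsto_one_div_add_atTop_nhds_zero_nat.congr (by simp [ht, one_div])
  have hxt : Tendsto (fun n => x + t n • v) atTop (𝓝 x) := by
    have : Tendsto (fun n => t n • v) atTop (𝓝 ((0:ℝ) • v)) := ht0.smul_const v
    simpa using tendsto_const_nhds.add this
  have hUev : ∀ᶠ n in atTop, x + t n • v ∈ U := hxt (hU.mem_nhds hxU)
  rw [mem_tangentConeAt_iff_exists_seq_norm_tendsto_atTop]
  refine ⟨fun n => (n : ℝ) + 1, fun n => P (x + t n • v) - x, ?_, ?_, ?_⟩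
  swap
  · filter_upwards [hUev] with n hn
    have : x + (P (x + t n • v) - x) = P (x + t n • v) := by abel
    rw [this]
    exact hPQ _ hn
  · have : Tendsto (fun n : ℕ => (n : ℝ) + 1) atTop atTop :=
      tendsto_atTop_add_const_right atTop 1 tendsto_natCast_atTop_atTop
    exact this.congr (fun n => by
      rw [Real.norm_eq_abs, abs_of_pos (by positivity)])
  · -- g t = P (x + t • v) has derivative A v = v at 0
    have hline : HasDerivAt (fun s : ℝ => x + s • v) v 0 := by
      simpa using ((hasDerivAt_id (0:ℝ)).smul_const v).const_add x
    have hA' : HasFDerivAt P A (x + (0:ℝ) • v) := by simpa using hA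
    have hg : HasDerivAt (fun s : ℝ => P (x + s • v)) (A v) 0 :=
      hA'.comp_hasDerivAt 0 hline
    have hslope : Tendsto (slope (fun s : ℝ => P (x + s • v)) 0) (𝓝[≠] (0:ℝ)) (𝓝 (A v)) :=
      hasDerivAt_iff_tendsto_slope.mp hg
    have htne' : Tendsto t atTop (𝓝[≠] (0:ℝ)) :=
      tendsto_nhdsWithin_of_tendsto_nhds_of_eventually_within _ ht0
        (Eventually.of_forall fun n => htne n)
    have := hslope.comp htne'
    rw [hv] at this
    refine this.congr fun n => ?_
    simp only [Function.comp_apply, slope_def_module, sub_zero, ht]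
    rw [inv_inv]
    congr 1
    simp [hPx]

/-- If the projection onto a prox-regular set is `C¹` near `x₀`, the tangent cone mapping is
outer-semicontinuous at `x₀`, and the dimension of the tangent cone at nearby points of `Q`
is at most its dimension at `x₀`. -/
theorem tangentCone_outer_semicontinuous {Q : Set E} {x₀ : E}
    (hQ : ProxRegularAt Q x₀) (P : E → E) (U : Set E)
    (hU : IsOpen U) (hxU : x₀ ∈ U) (hP : ∀ x ∈ U, P x ∈ projSet Q x)
    (hsm : ContDiffOn ℝ 1 P U) :
    (∀ (xi wi : ℕ → E) (w : E), (∀ i, xi i ∈ Q) → Tendsto xi atTop (𝓝 x₀) →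
        (∀ i, wi i ∈ tangentConeAt ℝ Q (xi i)) → Tendsto wi atTop (𝓝 w) →
        w ∈ tangentConeAt ℝ Q x₀) ∧
    ∃ ε > (0:ℝ), ∀ x ∈ Q, dist x x₀ < ε →
      Module.finrank ℝ (Submodule.span ℝ (tangentConeAt ℝ Q x)) ≤
      Module.finrank ℝ (Submodule.span ℝ (tangentConeAt ℝ Q x₀)) := by
  have hPQ : ∀ y ∈ U, P y ∈ Q := fun y hy => (hP y hy).1
  have hPid : ∀ y ∈ Q, y ∈ U → P y = y := by
    intro y hyQ hyU
    have := hP y hyU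
    rw [projSet_self hyQ] at this
    exact this
  have hdiff : ∀ x ∈ U, HasFDerivAt P (fderiv ℝ P x) x := fun x hx =>
    ((hsm.differentiableOn one_ne_zero).differentiableAt (hU.mem_nhds hx)).hasFDerivAt
  have hfc : ContinuousOn (fderiv ℝ P) U :=
    hsm.continuousOn_fderiv_of_isOpen hU le_rfl
  have hfcAt : ContinuousAt (fderiv ℝ P) x₀ := hfc.continuousAt (hU.mem_nhds hxU)
  set A₀ : E →L[ℝ] E := fderiv ℝ P x₀ with hA₀
  have hPx₀ : P x₀ = x₀ := hPid x₀ hQ.1 hxU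
  -- fixed points of A₀ lie in the tangent cone at x₀
  have hker : ∀ v : E, A₀ v = v → v ∈ tangentConeAt ℝ Q x₀ := fun v hv =>
    fixed_mem_tangentCone hU hPQ hxU hPx₀ (hdiff x₀ hxU) hv
  constructor
  · intro xi wi w hxiQ hxi hwi hw
    have hUev : ∀ᶠ i in atTop, xi i ∈ U := hxi (hU.mem_nhds hxU)
    have heq : ∀ᶠ i in atTop, fderiv ℝ P (xi i) (wi i) = wi i := by
      filter_upwards [hUev] with i hi
      exact fderiv_fixes_tangent hU hPid (hxiQ i) hi (hdiff _ hi) (hwi i)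
    have hAconv : Tendsto (fun i => fderiv ℝ P (xi i)) atTop (𝓝 A₀) :=
      hfcAt.tendsto.comp hxi
    have happ : Tendsto (fun i => fderiv ℝ P (xi i) (wi i)) atTop (𝓝 (A₀ w)) :=
      (isBoundedBilinearMap_apply.continuous.tendsto (A₀, w)).comp
        (hAconv.prodMk_nhds hw)
    have hfix : A₀ w = w := tendsto_nhds_unique (happ.congr' heq) hw
    exact hker w hfix
  · -- dimension estimate
    set L₀ : E →L[ℝ] E := A₀ - ContinuousLinearMap.id ℝ E with hL₀
    set K₀ : Submodule ℝ E := LinearMap.ker (L₀ : E →ₗ[ℝ] E) with hK₀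
    set W : Submodule ℝ E := K₀ᗮ with hW
    -- antilipschitz constant on W
    obtain ⟨K, hKpos, hKlip⟩ :
        ∃ K > 0, AntilipschitzWith K ((L₀ : E →ₗ[ℝ] E).comp W.subtype) := by
      apply LinearMap.exists_antilipschitzWith
      rw [LinearMap.ker_eq_bot']
      intro m hm
      have hmK : (m : E) ∈ K₀ := by
        rw [hK₀, LinearMap.mem_ker]
        simpa using hm
      have hmem : (m : E) ∈ K₀ ⊓ K₀ᗮ := ⟨hmK, m.2⟩
      rw [Submodule.inf_orthogonal_eq_bot] at hmem
      exact Subtype.ext (by simpa using hmem)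
    have hKinv : (0:ℝ) < (K:ℝ)⁻¹ := by positivity
    -- choose ε
    have hev : ∀ᶠ x in 𝓝 x₀, x ∈ U ∧ ‖fderiv ℝ P x - A₀‖ < (K:ℝ)⁻¹ := by
      have h1 : ∀ᶠ x in 𝓝 x₀, x ∈ U := hU.mem_nhds hxU
      have h2 : ∀ᶠ x in 𝓝 x₀, ‖fderiv ℝ P x - A₀‖ < (K:ℝ)⁻¹ := by
        have := hfcAt (Metric.ball_mem_nhds A₀ hKinv)
        exact Filter.mem_of_superset this fun y hy => by simpa [Metric.mem_ball, dist_eq_norm] using hy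
      exact h1.and h2
    rw [Metric.eventually_nhds_iff] at hev
    obtain ⟨ε, hεpos, hε⟩ := hev
    refine ⟨ε, hεpos, ?_⟩
    intro x hxQ hxd
    obtain ⟨hxU', hxnorm⟩ := hε hxd
    set B : E →L[ℝ] E := fderiv ℝ P x with hB
    set L : E →L[ℝ] E := B - ContinuousLinearMap.id ℝ E with hL
    -- span of tangent cone at x is contained in ker L
    have hspan : Submodule.span ℝ (tangentConeAt ℝ Q x) ≤ LinearMap.ker (L : E →ₗ[ℝ] E) := by
      rw [Submodule.span_le]
      intro w hw
      have := fderiv_fixes_tangent hU hPid hxQ hxU' (hdiff x hxU') hw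
      simp only [SetLike.mem_coe, LinearMap.mem_ker, hL]
      simp [hB, this]
    -- ker L is disjoint from W
    have hdisj : LinearMap.ker (L : E →ₗ[ℝ] E) ⊓ W = ⊥ := by
      rw [Submodule.eq_bot_iff]
      rintro w ⟨hw1, hw2⟩
      by_contra hwne
      have hLw : L w = 0 := by simpa [LinearMap.mem_ker] using hw1
      have h1 : ‖w‖ ≤ (K:ℝ) * ‖L₀ w‖ := by
        have := hKlip.le_mul_dist ⟨w, hw2⟩ 0
        simpa [dist_eq_norm] using this
      have h2 : L₀ w = (A₀ - B) w := by
        have : L₀ w - L w = (A₀ - B) w := by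
          simp only [hL₀, hL, ContinuousLinearMap.sub_apply,
            ContinuousLinearMap.id_apply]
          abel
        rw [hLw, sub_zero] at this
        exact this
      have h3 : ‖(A₀ - B) w‖ ≤ ‖A₀ - B‖ * ‖w‖ := (A₀ - B).le_opNorm w
      have h4 : ‖A₀ - B‖ < (K:ℝ)⁻¹ := by rwa [norm_sub_rev]
      have hwpos : (0:ℝ) < ‖w‖ := norm_pos_iff.mpr hwne
      have : ‖w‖ < ‖w‖ := by
        calc ‖w‖ ≤ (K:ℝ) * ‖L₀ w‖ := h1
          _ = (K:ℝ) * ‖(A₀ - B) w‖ := by rw [h2]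
          _ ≤ (K:ℝ) * (‖A₀ - B‖ * ‖w‖) := by
              exact mul_le_mul_of_nonneg_left h3 (by positivity)
          _ < (K:ℝ) * ((K:ℝ)⁻¹ * ‖w‖) := by
              apply mul_lt_mul_of_pos_left _ (by exact_mod_cast hKpos)
              exact mul_lt_mul_of_pos_right h4 hwpos
          _ = ‖w‖ := by
              field_simp
      exact absurd this (lt_irrefl _)
    -- dimension counting
    have hKW : Module.finrank ℝ K₀ + Module.finrank ℝ W = Module.finrank ℝ E :=
      Submodule.finrank_add_finrank_orthogonal K₀
    have hkerW : Module.finrank ℝ (LinearMap.ker (L : E →ₗ[ℝ] E)) + Module.finrank ℝ W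
        ≤ Module.finrank ℝ E := by
      have := Submodule.finrank_sup_add_finrank_inf_eq (LinearMap.ker (L : E →ₗ[ℝ] E)) W
      rw [hdisj] at this
      rw [finrank_bot] at this
      rw [add_zero] at this
      rw [← this]
      exact Submodule.finrank_le _
    have hK₀span : K₀ ≤ Submodule.span ℝ (tangentConeAt ℝ Q x₀) := by
      intro v hv
      apply Submodule.subset_span
      apply hker
      have : L₀ v = 0 := by rw [hK₀, LinearMap.mem_ker] at hv; simpa using hv
      have h5 : A₀ v - v = 0 := by simpa [hL₀, ContinuousLinearMap.sub_apply] using this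
      exact sub_eq_zero.mp h5
    calc Module.finrank ℝ (Submodule.span ℝ (tangentConeAt ℝ Q x))
        ≤ Module.finrank ℝ (LinearMap.ker (L : E →ₗ[ℝ] E)) := Submodule.finrank_mono hspan
      _ ≤ Module.finrank ℝ K₀ := by omega
      _ ≤ Module.finrank ℝ (Submodule.span ℝ (tangentConeAt ℝ Q x₀)) :=
          Submodule.finrank_mono hK₀span
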